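/- Let σ = co({x_j}_{j=0}^n) ⊂ ℝ^n be a simplex with affinely independent vertices, let g : ℝ^n → ℝ^n be twice continuously differentiable on an open set containing σ, and let β ≥ 0 satisfy |∂²g^{(p)}/∂x^{(q)}∂x^{(r)}(ξ)| ≤ β for all ξ ∈ σ and all p, q, r ∈ {1, …, n}. Let V : ℝ^n → ℝ be affine with gradient ∇V, and let l ∈ ℝ^n satisfy l ≥ |∇V| entrywise. Then for every x = Σ_{j=0}^n α_j x_j in σ with barycentric coordinates α_j, the Dini derivative of V at x along g satisfies D⁺V(x) ≤ Σ_{j=0}^n α_j ( g(x_j)ᵀ∇V + c_j β 1_nᵀ l ). -/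

import Mathlib

open Filter Topology Set
open scoped BigOperators

/-- Second partial derivative `∂²φ/∂x^{(q)}∂x^{(r)}` of a scalar function on ℝⁿ. -/
noncomputable def secondPartial {n : ℕ} (φ : EuclideanSpace ℝ (Fin n) → ℝ) (q r : Fin n)
    (ξ : EuclideanSpace ℝ (Fin n)) : ℝ :=
  fderiv ℝ (fun y => fderiv ℝ φ y (EuclideanSpace.single r 1)) ξ (EuclideanSpace.single q 1)

/-- Dini derivative of `V` at `y` along the vector field `g`:
`D⁺V(y) = limsup_{h→0⁺} (V(y + h g(y)) − V(y))/h`, valued in extended reals. -/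
noncomputable def diniDeriv {n : ℕ} (V : EuclideanSpace ℝ (Fin n) → ℝ)
    (g : EuclideanSpace ℝ (Fin n) → EuclideanSpace ℝ (Fin n))
    (y : EuclideanSpace ℝ (Fin n)) : EReal :=
  Filter.limsup (fun h : ℝ => (((V (y + h • g y) - V y) / h : ℝ) : EReal)) (𝓝[>] (0 : ℝ))

/-- ℓ¹ norm is at most `√n` times the ℓ² norm. -/
lemma aux_l1 (n : ℕ) (u : EuclideanSpace ℝ (Fin n)) :
    ∑ q, |u q| ≤ Real.sqrt n * ‖u‖ := by
  have h1 : (∑ q, |u q|)^2 ≤ (n : ℝ) * ∑ q, |u q|^2 := by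
    simpa using sq_sum_le_card_mul_sum_sq (s := (Finset.univ : Finset (Fin n)))
      (f := fun q => |u q|)
  have h2 : ‖u‖ = Real.sqrt (∑ q, (u q)^2) := by
    rw [EuclideanSpace.norm_eq]
    congr 1
    exact Finset.sum_congr rfl fun q _ => by rw [Real.norm_eq_abs, sq_abs]
  have h3 : ∑ q, |u q| = Real.sqrt ((∑ q, |u q|)^2) := by
    rw [Real.sqrt_sq (Finset.sum_nonneg fun q _ => abs_nonneg _)]
  rw [h3, h2, ← Real.sqrt_mul (Nat.cast_nonneg n)]
  apply Real.sqrt_le_sqrt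
  simpa [sq_abs] using h1

lemma aux_decomp (n : ℕ) (u : EuclideanSpace ℝ (Fin n)) :
    u = ∑ q, u q • EuclideanSpace.single q (1:ℝ) := by
  simpa [EuclideanSpace.basisFun_apply, EuclideanSpace.inner_single_left] using
    ((EuclideanSpace.basisFun (Fin n) ℝ).sum_repr' u).symm

/-- Operator-norm bound for a bilinear form from entrywise bounds. -/
lemma aux_opnorm (n : ℕ)
    (B : EuclideanSpace ℝ (Fin n) →L[ℝ] (EuclideanSpace ℝ (Fin n) →L[ℝ] ℝ))
    (β : ℝ) (hβ : 0 ≤ β)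
    (h : ∀ q r, |B (EuclideanSpace.single q 1) (EuclideanSpace.single r 1)| ≤ β) :
    ‖B‖ ≤ n * β := by
  apply B.opNorm_le_bound (by positivity)
  intro u
  apply (B u).opNorm_le_bound (by positivity)
  intro w
  have expand : B u w = ∑ q, ∑ r, (u q * w r) *
      B (EuclideanSpace.single q 1) (EuclideanSpace.single r 1) := by
    conv_lhs => rw [aux_decomp n u, aux_decomp n w]
    simp only [map_sum, map_smul, ContinuousLinearMap.sum_apply,
      ContinuousLinearMap.smul_apply, smul_eq_mul, Finset.mul_sum]
    rw [Finset.sum_comm]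
    exact Finset.sum_congr rfl fun q _ => Finset.sum_congr rfl fun r _ => by ring
  calc |B u w| ≤ ∑ q, ∑ r, |u q| * |w r| * β := by
        rw [expand]
        refine (Finset.abs_sum_le_sum_abs _ _).trans (Finset.sum_le_sum fun q _ => ?_)
        refine (Finset.abs_sum_le_sum_abs _ _).trans (Finset.sum_le_sum fun r _ => ?_)
        rw [abs_mul, abs_mul]
        exact mul_le_mul_of_nonneg_left (h q r) (by positivity)
    _ = (∑ q, |u q|) * (∑ r, |w r|) * β := by
        rw [Finset.sum_mul_sum, Finset.sum_mul]
        exact Finset.sum_congr rfl fun q _ => by rw [Finset.sum_mul]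
    _ ≤ (Real.sqrt n * ‖u‖) * (Real.sqrt n * ‖w‖) * β := by
        have h1 := aux_l1 n u
        have h2 := aux_l1 n w
        have h3 := Finset.sum_nonneg (fun q (_ : q ∈ Finset.univ) => abs_nonneg (u q))
        apply mul_le_mul_of_nonneg_right _ hβ
        exact mul_le_mul h1 h2 (Finset.sum_nonneg fun r _ => abs_nonneg (w r)) (by positivity)
    _ = ↑n * β * ‖u‖ * ‖w‖ := by
        rw [show (Real.sqrt n * ‖u‖) * (Real.sqrt n * ‖w‖) * β
          = (Real.sqrt n * Real.sqrt n) * β * ‖u‖ * ‖w‖ by ring,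
          Real.mul_self_sqrt (Nat.cast_nonneg n)]

/-- 1-D second-order bound via the mean value theorem. -/
lemma aux_1d (f f' : ℝ → ℝ) (C : ℝ)
    (hf : ∀ t ∈ Icc (0:ℝ) 1, HasDerivAt f (f' t) t)
    (hlip : ∀ t ∈ Icc (0:ℝ) 1, f' t - f' 0 ≤ C * t) :
    f 1 ≤ f 0 + f' 0 + C / 2 := by
  set G : ℝ → ℝ := fun t => f t - f 0 - t * f' 0 - C * t^2 / 2 with hGdef
  have hG' : ∀ t ∈ Icc (0:ℝ) 1, HasDerivAt G (f' t - f' 0 - C * t) t := by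
    intro t ht
    have h1 : HasDerivAt (fun t : ℝ => t * f' 0) (f' 0) t := by
      simpa using (hasDerivAt_id t).mul_const (f' 0)
    have h2 : HasDerivAt (fun t : ℝ => C * t^2 / 2) (C * t) t := by
      have := ((hasDerivAt_pow 2 t).const_mul C).div_const 2
      refine this.congr_deriv ?_
      rw [show (2:ℕ) - 1 = 1 from rfl, pow_one]; ring
    exact (((hf t ht).sub_const (f 0)).sub h1).sub h2
  have anti : AntitoneOn G (Icc 0 1) := by
    apply antitoneOn_of_deriv_nonpos (convex_Icc 0 1)
    · exact fun t ht => (hG' t ht).continuousAt.continuousWithinAt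
    · intro t ht
      rw [interior_Icc] at ht
      exact ((hG' t (Ioo_subset_Icc_self ht)).differentiableAt).differentiableWithinAt
    · intro t ht
      rw [interior_Icc] at ht
      rw [(hG' t (Ioo_subset_Icc_self ht)).deriv]
      have := hlip t (Ioo_subset_Icc_self ht)
      linarith
  have h01 : G 1 ≤ G 0 := anti (by constructor <;> norm_num) (by constructor <;> norm_num)
    (by norm_num)
  simp only [hGdef] at h01
  norm_num at h01
  linarith

/-- Second-order Taylor bound with uniform Hessian norm bound. -/
lemma aux_taylor (n : ℕ) (φ : EuclideanSpace ℝ (Fin n) → ℝ)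
    (U : Set (EuclideanSpace ℝ (Fin n))) (hU : IsOpen U)
    (hφ : ContDiffOn ℝ 2 φ U) (s : Set (EuclideanSpace ℝ (Fin n)))
    (hs : Convex ℝ s) (hsU : s ⊆ U)
    (K : ℝ) (hK : 0 ≤ K)
    (hb : ∀ ξ ∈ s, ‖fderiv ℝ (fderiv ℝ φ) ξ‖ ≤ K)
    (a y : EuclideanSpace ℝ (Fin n)) (ha : a ∈ s) (hy : y ∈ s) :
    |φ y - φ a - fderiv ℝ φ a (y - a)| ≤ K / 2 * ‖y - a‖ ^ 2 := by
  have hd1 : DifferentiableOn ℝ φ U := hφ.differentiableOn (by norm_num)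
  have hC1 : ContDiffOn ℝ 1 (fderiv ℝ φ) U := hφ.fderiv_of_isOpen hU (by norm_num)
  have hd2 : ∀ z ∈ U, DifferentiableAt ℝ (fderiv ℝ φ) z := fun z hz =>
    (hC1.differentiableOn (by norm_num)).differentiableAt (hU.mem_nhds hz)
  have hlipF : ∀ z ∈ s, ‖fderiv ℝ φ z - fderiv ℝ φ a‖ ≤ K * ‖z - a‖ := fun z hz =>
    hs.norm_image_sub_le_of_norm_fderiv_le (fun ξ hξ => hd2 ξ (hsU hξ)) hb ha hz
  set v := y - a with hv
  have hmem : ∀ t ∈ Icc (0:ℝ) 1, a + t • v ∈ s := by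
    intro t ht
    have := hs.add_smul_sub_mem ha hy ht
    simpa [hv] using this
  set F' : ℝ → ℝ := fun t => fderiv ℝ φ (a + t • v) v with hF'
  have hψ : ∀ t ∈ Icc (0:ℝ) 1, HasDerivAt (fun t : ℝ => φ (a + t • v)) (F' t) t := by
    intro t ht
    have hline : HasDerivAt (fun t : ℝ => a + t • v) v t := by
      simpa using ((hasDerivAt_id t).smul_const v).const_add a
    have hφat : DifferentiableAt ℝ φ (a + t • v) :=
      hd1.differentiableAt (hU.mem_nhds (hsU (hmem t ht)))
    exact hφat.hasFDerivAt.comp_hasDerivAt t hline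
  have hF'0 : F' 0 = fderiv ℝ φ a v := by simp [hF']
  have habs : ∀ t ∈ Icc (0:ℝ) 1, |F' t - F' 0| ≤ (K * ‖v‖^2) * t := by
    intro t ht
    have h1 : F' t - F' 0 = (fderiv ℝ φ (a + t • v) - fderiv ℝ φ a) v := by
      simp [hF', ContinuousLinearMap.sub_apply]
    rw [h1]
    calc |(fderiv ℝ φ (a + t • v) - fderiv ℝ φ a) v|
        ≤ ‖fderiv ℝ φ (a + t • v) - fderiv ℝ φ a‖ * ‖v‖ :=
          (fderiv ℝ φ (a + t • v) - fderiv ℝ φ a).le_opNorm v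
      _ ≤ (K * ‖a + t • v - a‖) * ‖v‖ := by
          apply mul_le_mul_of_nonneg_right _ (norm_nonneg v)
          exact hlipF _ (hmem t ht)
      _ = (K * ‖v‖^2) * t := by
          rw [add_sub_cancel_left, norm_smul, Real.norm_eq_abs, abs_of_nonneg ht.1]
          ring
  have hup := aux_1d (fun t => φ (a + t • v)) F' (K * ‖v‖^2) hψ
    (fun t ht => (le_abs_self _).trans (habs t ht))
  have hdown := aux_1d (fun t => -φ (a + t • v)) (fun t => -F' t) (K * ‖v‖^2)
    (fun t ht => (hψ t ht).neg)
    (fun t ht => by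
      have h := (neg_le_abs (F' t - F' 0)).trans (habs t ht)
      show -F' t - -F' 0 ≤ _
      linarith)
  have e1 : a + (1:ℝ) • v = y := by simp [hv]
  have e0 : a + (0:ℝ) • v = a := by simp
  beta_reduce at hup hdown
  rw [e1, e0] at hup hdown
  rw [abs_le]
  constructor
  · rw [hF'0] at hdown; nlinarith [hdown]
  · rw [hF'0] at hup; nlinarith [hup]

lemma aux_second (n : ℕ) (φ : EuclideanSpace ℝ (Fin n) → ℝ)
    (ξ : EuclideanSpace ℝ (Fin n))
    (hdiff : DifferentiableAt ℝ (fderiv ℝ φ) ξ) (q r : Fin n) :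
    secondPartial φ q r ξ =
      fderiv ℝ (fderiv ℝ φ) ξ (EuclideanSpace.single q 1) (EuclideanSpace.single r 1) := by
  have h := hdiff.hasFDerivAt
  have h2 := (ContinuousLinearMap.apply ℝ ℝ
    (EuclideanSpace.single r (1:ℝ))).hasFDerivAt.comp ξ h
  rw [secondPartial, show (fun y => fderiv ℝ φ y (EuclideanSpace.single r (1:ℝ)))
    = (ContinuousLinearMap.apply ℝ ℝ (EuclideanSpace.single r (1:ℝ))) ∘ (fderiv ℝ φ) from rfl,
    h2.fderiv]
  rfl

/-- upper bound on the Dini derivative of an affine `V` along `g`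
on a simplex, in terms of vertex data. -/
theorem stmt1 (n : ℕ)
    (x : Fin (n + 1) → EuclideanSpace ℝ (Fin n))
    (hx : LinearIndependent ℝ (fun j : Fin n => x j.succ - x 0))
    (g : EuclideanSpace ℝ (Fin n) → EuclideanSpace ℝ (Fin n))
    (U : Set (EuclideanSpace ℝ (Fin n))) (hU : IsOpen U)
    (hσU : convexHull ℝ (Set.range x) ⊆ U)
    (hg : ContDiffOn ℝ 2 g U)
    (β : ℝ) (hβ0 : 0 ≤ β)
    (hβ : ∀ ξ ∈ convexHull ℝ (Set.range x), ∀ p q r : Fin n,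
      |secondPartial (fun y => g y p) q r ξ| ≤ β)
    -- V is affine with gradient gradV: V(y) = gradVᵀ y + ω
    (V : EuclideanSpace ℝ (Fin n) → ℝ) (gradV : Fin n → ℝ) (ω : ℝ)
    (hV : ∀ y, V y = (∑ i, gradV i * y i) + ω)
    (l : Fin n → ℝ) (hl : ∀ i, |gradV i| ≤ l i)
    (c : Fin (n + 1) → ℝ)
    (hc : ∀ j, c j = ((n : ℝ) / 2) * ‖x j - x 0‖ *
      ((⨆ k : Fin n, ‖x k.succ - x 0‖) + ‖x j - x 0‖))
    (α : Fin (n + 1) → ℝ) (hα0 : ∀ j, 0 ≤ α j) (hα1 : ∑ j, α j = 1) :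
    diniDeriv V g (∑ j, α j • x j) ≤
      ((∑ j, α j * ((∑ i, g (x j) i * gradV i) + c j * β * ∑ i, l i) : ℝ) : EReal) := by
  classical
  set σ := convexHull ℝ (Set.range x) with hσdef
  have hconv : Convex ℝ σ := convex_convexHull ℝ _
  have hxσ : ∀ j, x j ∈ σ := fun j => subset_convexHull ℝ _ ⟨j, rfl⟩
  set xb := ∑ j, α j • x j with hxb
  have hxbσ : xb ∈ σ := hconv.sum_mem (fun j _ => hα0 j) hα1 (fun j _ => hxσ j)
  set M := ⨆ k : Fin n, ‖x k.succ - x 0‖ with hM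
  have hM0 : 0 ≤ M := Real.iSup_nonneg fun k => norm_nonneg _
  have hMle : ∀ j, ‖x j - x 0‖ ≤ M := by
    intro j
    induction j using Fin.cases with
    | zero => simpa using hM0
    | succ k =>
        have hb : BddAbove (Set.range fun k : Fin n => ‖x k.succ - x 0‖) :=
          Set.Finite.bddAbove (Set.finite_range _)
        exact le_ciSup hb k
  have hcnn : ∀ j, 0 ≤ c j := by
    intro j
    rw [hc j]
    exact mul_nonneg (mul_nonneg (by positivity) (norm_nonneg _))
      (add_nonneg hM0 (norm_nonneg _))
  set D := ∑ j, α j * (c j * β) with hD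
  have hD0 : 0 ≤ D :=
    Finset.sum_nonneg fun j _ => mul_nonneg (hα0 j) (mul_nonneg (hcnn j) hβ0)
  -- decomposition of xb - x 0
  have hbar : xb - x 0 = ∑ j, α j • (x j - x 0) := by
    simp only [smul_sub, Finset.sum_sub_distrib, ← Finset.sum_smul, hα1, one_smul, hxb]
  have hnorm1 : ‖xb - x 0‖ ≤ ∑ j, α j * ‖x j - x 0‖ := by
    rw [hbar]
    refine (norm_sum_le _ _).trans (le_of_eq ?_)
    exact Finset.sum_congr rfl fun j _ => by
      rw [norm_smul, Real.norm_eq_abs, abs_of_nonneg (hα0 j)]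
  have hnorm2 : ‖xb - x 0‖ ≤ M := by
    refine hnorm1.trans ?_
    calc ∑ j, α j * ‖x j - x 0‖ ≤ ∑ j, α j * M :=
          Finset.sum_le_sum fun j _ => mul_le_mul_of_nonneg_left (hMle j) (hα0 j)
      _ = M := by rw [← Finset.sum_mul, hα1, one_mul]
  -- key componentwise estimate
  have key : ∀ p : Fin n, |g xb p - ∑ j, α j * g (x j) p| ≤ D := by
    intro p
    set φ : EuclideanSpace ℝ (Fin n) → ℝ := fun y => g y p with hφdef
    have hφ : ContDiffOn ℝ 2 φ U := by
      have := (EuclideanSpace.proj (𝕜 := ℝ) p).contDiff.comp_contDiffOn hg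
      exact this
    have hC1 : ContDiffOn ℝ 1 (fderiv ℝ φ) U := hφ.fderiv_of_isOpen hU (by norm_num)
    have hd2 : ∀ z ∈ U, DifferentiableAt ℝ (fderiv ℝ φ) z := fun z hz =>
      (hC1.differentiableOn (by norm_num)).differentiableAt (hU.mem_nhds hz)
    have hbB : ∀ ξ ∈ σ, ‖fderiv ℝ (fderiv ℝ φ) ξ‖ ≤ ↑n * β := by
      intro ξ hξ
      apply aux_opnorm n _ β hβ0
      intro q r
      rw [← aux_second n φ ξ (hd2 ξ (hσU hξ)) q r]
      exact hβ ξ hξ p q r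
    set L := fderiv ℝ φ (x 0) with hL
    have hR : ∀ y ∈ σ, |φ y - φ (x 0) - L (y - x 0)| ≤ (↑n * β)/2 * ‖y - x 0‖^2 :=
      fun y hy => aux_taylor n φ U hU hφ σ hconv hσU (↑n * β)
        (mul_nonneg (Nat.cast_nonneg n) hβ0) hbB (x 0) y (hxσ 0) hy
    have hlin : L (xb - x 0) = ∑ j, α j * L (x j - x 0) := by
      rw [hbar, map_sum]
      exact Finset.sum_congr rfl fun j _ => by rw [map_smul, smul_eq_mul]
    have hsplit : φ xb - ∑ j, α j * φ (x j)
        = (φ xb - φ (x 0) - L (xb - x 0))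
          - ∑ j, α j * (φ (x j) - φ (x 0) - L (x j - x 0)) := by
      have h1 : ∑ j, α j * (φ (x j) - φ (x 0) - L (x j - x 0))
          = (∑ j, α j * φ (x j)) - φ (x 0) - L (xb - x 0) := by
        rw [hlin]
        simp only [mul_sub]
        rw [Finset.sum_sub_distrib, Finset.sum_sub_distrib, ← Finset.sum_mul, hα1, one_mul]
      rw [h1]; ring
    have hA : |φ xb - φ (x 0) - L (xb - x 0)|
        ≤ (↑n * β)/2 * ((∑ j, α j * ‖x j - x 0‖) * M) := by
      refine (hR xb hxbσ).trans ?_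
      apply mul_le_mul_of_nonneg_left _ (by positivity)
      rw [sq]
      exact mul_le_mul hnorm1 hnorm2 (norm_nonneg _)
        (Finset.sum_nonneg fun j _ => mul_nonneg (hα0 j) (norm_nonneg _))
    have hB : |∑ j, α j * (φ (x j) - φ (x 0) - L (x j - x 0))|
        ≤ ∑ j, α j * ((↑n * β)/2 * ‖x j - x 0‖^2) := by
      refine (Finset.abs_sum_le_sum_abs _ _).trans (Finset.sum_le_sum fun j _ => ?_)
      rw [abs_mul, abs_of_nonneg (hα0 j)]
      exact mul_le_mul_of_nonneg_left (hR (x j) (hxσ j)) (hα0 j)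
    have hcomb : |φ xb - ∑ j, α j * φ (x j)|
        ≤ (↑n * β)/2 * ((∑ j, α j * ‖x j - x 0‖) * M)
          + ∑ j, α j * ((↑n * β)/2 * ‖x j - x 0‖^2) := by
      rw [hsplit]
      exact (abs_sub _ _).trans (add_le_add hA hB)
    have heq : (↑n * β)/2 * ((∑ j, α j * ‖x j - x 0‖) * M)
        + ∑ j, α j * ((↑n * β)/2 * ‖x j - x 0‖^2) = D := by
      rw [hD, Finset.sum_mul, Finset.mul_sum, ← Finset.sum_add_distrib]
      refine Finset.sum_congr rfl fun j _ => ?_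
      rw [hc j]
      push_cast
      ring
    rw [heq] at hcomb
    simpa only [hφdef] using hcomb
  -- Dini derivative of affine V equals gradient dot g
  have hdini : diniDeriv V g xb = ((∑ i, g xb i * gradV i : ℝ) : EReal) := by
    have hev : ∀ᶠ h in 𝓝[>] (0:ℝ),
        (fun h : ℝ => (((V (xb + h • g xb) - V xb) / h : ℝ) : EReal)) h
        = (fun _ : ℝ => ((∑ i, g xb i * gradV i : ℝ) : EReal)) h := by
      filter_upwards [self_mem_nhdsWithin] with h hh
      have hh' : (h:ℝ) ≠ 0 := ne_of_gt hh
      have hcoord : ∀ i, (xb + h • g xb) i = xb i + h * g xb i := fun i => rfl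
      have hnum : V (xb + h • g xb) - V xb = h * ∑ i, g xb i * gradV i := by
        rw [hV (xb + h • g xb), hV xb]
        have hterm : ∀ i, gradV i * (xb + h • g xb) i
            = gradV i * xb i + h * (g xb i * gradV i) := fun i => by
          rw [hcoord i]; ring
        rw [Finset.sum_congr rfl fun i _ => hterm i, Finset.sum_add_distrib, Finset.mul_sum]
        ring
      have : (V (xb + h • g xb) - V xb) / h = ∑ i, g xb i * gradV i := by
        rw [hnum, mul_div_cancel_left₀ _ hh']
      simp only [this]
    rw [diniDeriv, Filter.limsup_congr hev]
    exact Filter.limsup_const _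
  rw [hdini, EReal.coe_le_coe_iff]
  -- the real inequality
  have hswap : ∑ j, α j * ∑ i, g (x j) i * gradV i
      = ∑ i, gradV i * ∑ j, α j * g (x j) i := by
    simp only [Finset.mul_sum]
    rw [Finset.sum_comm]
    exact Finset.sum_congr rfl fun i _ => Finset.sum_congr rfl fun j _ => by ring
  have hfin : ∑ i, gradV i * (g xb i - ∑ j, α j * g (x j) i) ≤ ∑ i, l i * D := by
    refine Finset.sum_le_sum fun i _ => ?_
    refine (le_abs_self _).trans ?_
    rw [abs_mul]
    exact mul_le_mul (hl i) (key i) (abs_nonneg _) ((abs_nonneg _).trans (hl i))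
  have hRHS : ∑ j, α j * ((∑ i, g (x j) i * gradV i) + c j * β * ∑ i, l i)
      = (∑ j, α j * ∑ i, g (x j) i * gradV i) + D * ∑ i, l i := by
    rw [hD, Finset.sum_mul, ← Finset.sum_add_distrib]
    exact Finset.sum_congr rfl fun j _ => by ring
  calc ∑ i, g xb i * gradV i
      = (∑ i, gradV i * (g xb i - ∑ j, α j * g (x j) i))
        + ∑ i, gradV i * ∑ j, α j * g (x j) i := by
        rw [← Finset.sum_add_distrib]
        exact Finset.sum_congr rfl fun i _ => by ring
    _ ≤ (∑ i, l i * D) + ∑ i, gradV i * ∑ j, α j * g (x j) i := add_le_add_left hfin _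
    _ = (∑ j, α j * ∑ i, g (x j) i * gradV i) + D * ∑ i, l i := by
        rw [← hswap, ← Finset.sum_mul]
        ring
    _ = ∑ j, α j * ((∑ i, g (x j) i * gradV i) + c j * β * ∑ i, l i) := hRHS.symm
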